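/- Let A_1,…,A_K ∈ 𝓕 be a measurable partition of Ω and, for each i = 1,…,K, let I^i = (I^i_m)_{m=1,…,h_i} be a partition of {1,…,N}. Let B be the set of N-vectors Y of real random variables such that Σ_{n=1}^N Y^n is P-a.s. constant and, for every i and every m, Σ_{n∈I^i_m} Y^n is P-a.s. constant on A_i. Let Q^1,…,Q^N be probability measures on (Ω, 𝓕) absolutely continuous with respect to P such that Σ_{n=1}^N E_{Q^n}[Z^n] ≤ 0 for every bounded Z ∈ B with Σ_{n=1}^N Z^n = 0 P-a.s. Then for every i, every m, all j, k ∈ I^i_m and every F ∈ 𝓕, Q^j(F ∩ A_i) = Q^k(F ∩ A_i). -/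
import Mathlib


open MeasureTheory

/-- Lemma 4.20: for scenario-dependent clustering constraint sets, the components of any
    polar pricing vector corresponding to agents in the same cluster agree on the trace
    σ-algebra of the corresponding scenario.  The partition of `{1,…,N}` associated with
    the scenario `A i` is encoded by the labelling map `c i : Fin N → ℕ` (two agents lie
    in the same cluster of the `i`-th partition iff they carry the same label). -/
theorem cluster_components_agree
    {Ω : Type*} [MeasurableSpace Ω] (P : Measure Ω) [IsProbabilityMeasure P]
    (N K : ℕ) (hN : 1 ≤ N)
    (A : Fin K → Set Ω) (hAmeas : ∀ i, MeasurableSet (A i))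
    (hAdisj : Pairwise (Function.onFun Disjoint A))
    (hAcover : (⋃ i, A i) = Set.univ)
    (c : Fin K → Fin N → ℕ)
    (Q : Fin N → Measure Ω) [∀ n, IsProbabilityMeasure (Q n)]
    (hQP : ∀ n, Q n ≪ P)
    -- `Σₙ E_{Q^n}[Z^n] ≤ 0` for every bounded `Z ∈ B` with `Σₙ Z^n = 0` a.s.,
    -- where `Z ∈ B` means: `Σₙ Z^n` is a.s. constant and each cluster sum of the
    -- `i`-th partition is a.s. constant on `A i`.
    (hpolar : ∀ Z : Fin N → Ω → ℝ,
      (∀ n, Measurable (Z n)) →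
      (∃ C : ℝ, ∀ n ω, |Z n ω| ≤ C) →
      (∃ const : ℝ, ∀ᵐ ω ∂P, ∑ n, Z n ω = const) →
      (∀ (i : Fin K) (m : ℕ), ∃ d : ℝ, ∀ᵐ ω ∂P, ω ∈ A i →
        ∑ n ∈ Finset.univ.filter (fun n => c i n = m), Z n ω = d) →
      (∀ᵐ ω ∂P, ∑ n, Z n ω = 0) →
      ∑ n, ∫ ω, Z n ω ∂(Q n) ≤ 0) :
    ∀ (i : Fin K) (j k : Fin N), c i j = c i k →
      ∀ F : Set Ω, MeasurableSet F → Q j (F ∩ A i) = Q k (F ∩ A i) := by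
  intro i j₀ k₀ hjk₀ F hF
  set s : Set Ω := F ∩ A i with hs_def
  have hs : MeasurableSet s := hF.inter (hAmeas i)
  set g : Ω → ℝ := s.indicator (fun _ => 1) with hg_def
  have hg_meas : Measurable g := measurable_one.indicator hs
  have key : ∀ j k : Fin N, c i j = c i k →
      (Q j s).toReal ≤ (Q k s).toReal := by
    intro j k hjk
    set coef : Fin N → ℝ :=
      fun n => (if n = j then (1 : ℝ) else 0) - (if n = k then (1 : ℝ) else 0) with hcoef
    set Z : Fin N → Ω → ℝ := fun n ω => coef n * g ω with hZ
    -- sum of coefficients over any finset containing/excluding j,k pairwise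
    have coef_sum : ∀ S : Finset (Fin N),
        ∑ n ∈ S, coef n = (if j ∈ S then (1 : ℝ) else 0) - (if k ∈ S then (1 : ℝ) else 0) := by
      intro S
      rw [hcoef, Finset.sum_sub_distrib]
      rw [Finset.sum_ite_eq' S j (fun _ => (1 : ℝ)), Finset.sum_ite_eq' S k (fun _ => (1 : ℝ))]
    have hZsum : ∀ ω, ∑ n, Z n ω = 0 := by
      intro ω
      rw [hZ]
      simp only
      rw [← Finset.sum_mul, coef_sum]
      simp
    have h1 := hpolar Z
      (fun n => (measurable_const.mul hg_meas))
      ⟨1, by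
        intro n ω
        rw [hZ]
        simp only
        rw [abs_mul]
        have h1 : |coef n| ≤ 1 := by
          rw [hcoef]; simp only; split_ifs <;> norm_num
        have h2 : |g ω| ≤ 1 := by
          rw [hg_def]
          by_cases hω : ω ∈ s <;> simp [Set.indicator, hω]
        calc |coef n| * |g ω| ≤ 1 * 1 := by
              exact mul_le_mul h1 h2 (abs_nonneg _) zero_le_one
          _ = 1 := by norm_num⟩
      ⟨0, Filter.Eventually.of_forall (fun ω => hZsum ω)⟩
      (by
        intro i' m
        refine ⟨0, Filter.Eventually.of_forall ?_⟩
        intro ω hω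
        rw [hZ]
        simp only
        rw [← Finset.sum_mul, coef_sum]
        by_cases hii : i' = i
        · subst hii
          have : (j ∈ Finset.univ.filter (fun n => c i' n = m)) ↔
              (k ∈ Finset.univ.filter (fun n => c i' n = m)) := by
            simp [hjk]
          by_cases hj : j ∈ Finset.univ.filter (fun n => c i' n = m)
          · rw [if_pos hj, if_pos (this.mp hj)]; ring
          · rw [if_neg hj, if_neg (fun hk => hj (this.mpr hk))]; ring
        · have hωi : ω ∉ A i := by
            intro hωi
            exact (hAdisj hii).le_bot ⟨hω, hωi⟩ 
          have : g ω = 0 := by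
            rw [hg_def]
            apply Set.indicator_of_notMem
            intro hωs
            exact hωi hωs.2
          rw [this, mul_zero])
      (Filter.Eventually.of_forall (fun ω => hZsum ω))
    -- compute the integrals
    have hint : ∀ n, ∫ ω, Z n ω ∂(Q n) = coef n * (Q n s).toReal := by
      intro n
      rw [hZ]
      simp only
      rw [MeasureTheory.integral_const_mul]
      congr 1
      rw [hg_def]
      exact integral_indicator_one hs
    rw [Finset.sum_congr rfl (fun n _ => hint n)] at h1
    have hsum : ∑ n, coef n * (Q n s).toReal
        = (Q j s).toReal - (Q k s).toReal := by
      rw [hcoef]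
      simp only [sub_mul, ite_mul, one_mul, zero_mul]
      rw [Finset.sum_sub_distrib,
        Finset.sum_ite_eq' Finset.univ j (fun n => (Q n s).toReal),
        Finset.sum_ite_eq' Finset.univ k (fun n => (Q n s).toReal)]
      simp
    rw [hsum] at h1
    linarith
  have h1 := key j₀ k₀ hjk₀
  have h2 := key k₀ j₀ hjk₀.symm
  have := le_antisymm h1 h2
  exact (ENNReal.toReal_eq_toReal_iff' (measure_ne_top _ _) (measure_ne_top _ _)).mp this
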